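/- Define φ(x) = x − x^{4/3} for x ∈ [0, 27/64]. For any x₀ ∈ (0, 27/64], the sequence x_{n+1} = φ(x_n) satisfies lim_{n→∞} n³ · x_n = 27. -/

import Mathlib

open Filter Real

theorem cube_asymptotics_of_example_sequence
    (x : ℕ → ℝ) (hx0 : x 0 ∈ Set.Ioc (0 : ℝ) (27 / 64))
    (hrec : ∀ n : ℕ, x (n + 1) = x n - x n ^ ((4 : ℝ) / 3)) :
    Filter.Tendsto (fun n : ℕ => (n : ℝ) ^ 3 * x n) Filter.atTop (nhds 27) := by
  obtain ⟨hx0pos, hx0le⟩ := hx0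
  -- bounds
  have hsplit : ∀ n, x n ≤ 27/64 → 0 < x n → x n ^ ((4:ℝ)/3) = x n * x n ^ ((1:ℝ)/3) := by
    intro n _ hp
    rw [show (4:ℝ)/3 = 1 + 1/3 by norm_num, Real.rpow_add hp, Real.rpow_one]
  have hbound : ∀ n, 0 < x n ∧ x n ≤ 27/64 := by
    intro n
    induction n with
    | zero => exact ⟨hx0pos, hx0le⟩
    | succ n ih =>
      obtain ⟨hp, hle⟩ := ih
      have h13 : x n ^ ((1:ℝ)/3) < 1 :=
        Real.rpow_lt_one hp.le (by linarith) (by norm_num)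
      constructor
      · rw [hrec n, hsplit n hle hp]
        nlinarith
      · rw [hrec n]
        have := Real.rpow_nonneg hp.le ((4:ℝ)/3)
        linarith
  -- x tends to 0
  have hanti : Antitone x := by
    apply antitone_nat_of_succ_le
    intro n
    rw [hrec n]
    have := Real.rpow_nonneg (hbound n).1.le ((4:ℝ)/3)
    linarith
  have hbdd : BddBelow (Set.range x) := ⟨0, by rintro _ ⟨n, rfl⟩; exact (hbound n).1.le⟩
  have hconv : Tendsto x atTop (nhds (⨅ n, x n)) := tendsto_atTop_ciInf hanti hbdd
  set L := ⨅ n, x n with hLdef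
  have hL0 : 0 ≤ L := le_ciInf fun n => (hbound n).1.le
  have hLeq : L = L - L ^ ((4:ℝ)/3) := by
    have h1 : Tendsto (fun n => x (n+1)) atTop (nhds L) :=
      hconv.comp (tendsto_add_atTop_nat 1)
    have hcont : ContinuousAt (fun y : ℝ => y ^ ((4:ℝ)/3)) L :=
      Real.continuousAt_rpow_const L _ (Or.inr (by norm_num))
    have h2 : Tendsto (fun n => x n - x n ^ ((4:ℝ)/3)) atTop
        (nhds (L - L ^ ((4:ℝ)/3))) :=
      hconv.sub (hcont.tendsto.comp hconv)
    exact tendsto_nhds_unique (h1.congr fun n => hrec n) h2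
  have hLzero : L = 0 := by
    have h43 : L ^ ((4:ℝ)/3) = 0 := by linarith
    exact (Real.rpow_eq_zero hL0 (by norm_num : (4:ℝ)/3 ≠ 0)).mp h43
  have hx0' : Tendsto x atTop (nhds 0) := hLzero ▸ hconv
  -- t n = x n ^ (1/3)
  set t : ℕ → ℝ := fun n => x n ^ ((1:ℝ)/3) with ht
  have htpos : ∀ n, 0 < t n := fun n => Real.rpow_pos_of_pos (hbound n).1 _
  have htlt1 : ∀ n, t n < 1 := fun n =>
    Real.rpow_lt_one (hbound n).1.le (by linarith [(hbound n).2]) (by norm_num)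
  have ht0 : Tendsto t atTop (nhds 0) := by
    have hcont : ContinuousAt (fun y : ℝ => y ^ ((1:ℝ)/3)) 0 :=
      Real.continuousAt_rpow_const 0 _ (Or.inr (by norm_num))
    have h := hcont.tendsto.comp hx0'
    rw [show ((0:ℝ) ^ ((1:ℝ)/3)) = 0 from Real.zero_rpow (by norm_num)] at h
    exact h
  -- u n = x n ^ (-(1/3))
  set u : ℕ → ℝ := fun n => x n ^ (-(1:ℝ)/3) with hu
  have huinv : ∀ n, u n = (t n)⁻¹ := by
    intro n
    rw [hu, ht]
    simp only [neg_div]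
    rw [Real.rpow_neg (hbound n).1.le]
  have hupos : ∀ n, 0 < u n := fun n => (huinv n) ▸ inv_pos.mpr (htpos n)
  -- the difference formula
  set f : ℝ → ℝ := fun s => (1 - s) ^ (-(1:ℝ)/3) with hf
  have hdiff : ∀ n, u (n+1) - u n = (f (t n) - 1) / t n := by
    intro n
    have hxn1 : x (n+1) = x n * (1 - t n) := by
      rw [hrec n, hsplit n (hbound n).2 (hbound n).1]; ring
    have h1t : (0:ℝ) ≤ 1 - t n := by linarith [htlt1 n]
    have key : u (n+1) = u n * f (t n) := by
      show x (n+1) ^ (-(1:ℝ)/3) = x n ^ (-(1:ℝ)/3) * (1 - t n) ^ (-(1:ℝ)/3)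
      rw [hxn1, Real.mul_rpow (hbound n).1.le h1t]
    rw [key, huinv n]
    field_simp
  -- limit of the difference via derivative
  have hslope : Tendsto (slope f 0) (nhdsWithin 0 {0}ᶜ) (nhds (1/3)) := by
    have h1 : HasDerivAt (fun s : ℝ => 1 - s) (-1) 0 := by
      simpa using (hasDerivAt_id (0:ℝ)).const_sub 1
    have h2 : HasDerivAt (fun y : ℝ => y ^ (-(1:ℝ)/3))
        ((-(1:ℝ)/3) * (1 - 0) ^ ((-(1:ℝ)/3) - 1)) (1 - 0) :=
      Real.hasDerivAt_rpow_const (Or.inl (by norm_num))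
    have h3 : HasDerivAt f ((-(1:ℝ)/3) * (1 - 0) ^ ((-(1:ℝ)/3) - 1) * (-1)) 0 :=
      h2.comp 0 h1
    have h4 : ((-(1:ℝ)/3) * (1 - 0) ^ ((-(1:ℝ)/3) - 1) * (-1)) = 1/3 := by
      norm_num
    rw [h4] at h3
    exact hasDerivAt_iff_tendsto_slope.mp h3
  have hdiff_lim : Tendsto (fun n => u (n+1) - u n) atTop (nhds (1/3)) := by
    have htne : ∀ n, t n ∈ ({0}ᶜ : Set ℝ) := fun n => (htpos n).ne'
    have ht0' : Tendsto t atTop (nhdsWithin 0 {0}ᶜ) :=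
      tendsto_nhdsWithin_of_tendsto_nhds_of_eventually_within t ht0
        (Eventually.of_forall htne)
    have := hslope.comp ht0'
    have hf0 : f 0 = 1 := by simp [hf]
    refine this.congr fun n => ?_
    rw [Function.comp_apply, slope_def_field, hf0, hdiff n, sub_zero]
  -- Cesàro
  have hcesaro : Tendsto (fun n : ℕ => (n:ℝ)⁻¹ * (u n - u 0)) atTop (nhds (1/3)) := by
    have := hdiff_lim.cesaro
    refine this.congr fun n => ?_
    rw [Finset.sum_range_sub (fun i => u i) n]
  have hun : Tendsto (fun n : ℕ => u n / n) atTop (nhds (1/3)) := by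
    have h0 : Tendsto (fun n : ℕ => u 0 / (n:ℝ)) atTop (nhds 0) :=
      tendsto_const_div_atTop_nhds_zero_nat (u 0)
    have h := hcesaro.add h0
    rw [add_zero] at h
    refine h.congr' ?_
    filter_upwards [eventually_gt_atTop 0] with n hn
    have hne : (n:ℝ) ≠ 0 := Nat.cast_ne_zero.mpr hn.ne'
    field_simp
    ring
  -- conclude
  have hinv : Tendsto (fun n : ℕ => (u n / n)⁻¹) atTop (nhds 3) := by
    have := hun.inv₀ (by norm_num : (1:ℝ)/3 ≠ 0)
    simpa using this
  have hcube : Tendsto (fun n : ℕ => ((u n / n)⁻¹) ^ 3) atTop (nhds 27) := by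
    have h := hinv.pow 3
    norm_num at h ⊢
    convert h using 2
  refine hcube.congr' ?_
  filter_upwards [eventually_gt_atTop 0] with n hn
  have hnpos : (0:ℝ) < n := by exact_mod_cast hn
  have hucube : u n ^ 3 = (x n)⁻¹ := by
    rw [hu]
    rw [← Real.rpow_natCast (x n ^ (-(1:ℝ)/3)) 3, ← Real.rpow_mul (hbound n).1.le]
    norm_num [Real.rpow_neg_one]
  have : ((u n / n)⁻¹) ^ 3 = (n:ℝ)^3 / u n ^ 3 := by
    rw [inv_div, div_pow]
  rw [this, hucube, div_eq_mul_inv, inv_inv]
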